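/- Fix an integer g ≥ 2, a constant C ≥ 1, (x₀,y₀) ∈ ℝ² with 1, x₀, y₀ linearly independent over ℚ, and a sequence (δ_j)_{j≥0} of positive reals with liminf_{j→∞} j·δ_j > 2 and limsup_{j→∞} j·δ_j < ∞. Then for every ε > 0 there exists L₀ = L₀(ε) such that every admissible sequence (w_j)_{j≥0} with |w₀| ≥ L₀ satisfies sup_{j≥0} (log|w_j|)² / |w_j|^{δ_j δ_{j+1}} ≤ ε. -/

import Mathlib

open Pointwise

noncomputable section

/-- Cross product of two vectors in ℝ²: `(a,b) × (c,d) = a d − b c`. -/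
def crossP (u v : ℝ × ℝ) : ℝ := u.1 * v.2 - u.2 * v.1

/-- Euclidean inner product on ℝ². -/
def dotP (u v : ℝ × ℝ) : ℝ := u.1 * v.1 + u.2 * v.2

/-- Euclidean norm on ℝ². -/
def nrm (u : ℝ × ℝ) : ℝ := Real.sqrt (u.1 ^ 2 + u.2 ^ 2)

/-- The set `Z` of primitive integer vectors. -/
def Zset : Set (ℝ × ℝ) := {v | ∃ p q : ℤ, Int.gcd p q = 1 ∧ v = ((p : ℝ), (q : ℝ))}

/-- The set `W = ±(x₀,y₀) + ℤ²`. -/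
def Wset (x₀ y₀ : ℝ) : Set (ℝ × ℝ) :=
  {w | ∃ m n : ℤ, w = (x₀ + m, y₀ + n) ∨ w = (-x₀ + m, -y₀ + n)}

/-- The set `V = W ∪ Z` of holonomy vectors of saddle connections. -/
def Vset (x₀ y₀ : ℝ) : Set (ℝ × ℝ) := Wset x₀ y₀ ∪ Zset

/-- `1, x₀, y₀` are linearly independent over `ℚ`. -/
def QLinIndep (x₀ y₀ : ℝ) : Prop :=
  ∀ a b c : ℚ, (a : ℝ) * x₀ + (b : ℝ) * y₀ + (c : ℝ) = 0 → a = 0 ∧ b = 0 ∧ c = 0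

/-- `w'` is a child of `w` at stage `j` (with parameters `g`, `C`, `δj`):
`|w|^{1+δ_j} ≤ |w'| ≤ C|w|^{1+δ_j}`, `C⁻¹/log|w| ≤ |w×w'| ≤ C/log|w|`, and
`w' = w + g v'` for some `v' ∈ Z` with `|v'| > |w|` and `w·v' > 0`. -/
def IsChild (g : ℕ) (C : ℝ) (x₀ y₀ : ℝ) (δj : ℝ) (w w' : ℝ × ℝ) : Prop :=
  w' ∈ Wset x₀ y₀ ∧
  nrm w ^ (1 + δj) ≤ nrm w' ∧ nrm w' ≤ C * nrm w ^ (1 + δj) ∧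
  C⁻¹ / Real.log (nrm w) ≤ |crossP w w'| ∧ |crossP w w'| ≤ C / Real.log (nrm w) ∧
  ∃ v' ∈ Zset, nrm w < nrm v' ∧ 0 < dotP w v' ∧ w' = w + (g : ℝ) • v'

/-- `(w_0, …, w_j)` is an admissible sequence: `|w₀| > 1`, `w₀ ∈ ±(x₀,y₀)+gℤ²`,
and `w_{i+1}` is a child of `w_i` at stage `i` for all `i < j`. -/
def AdmissibleUpTo (g : ℕ) (C : ℝ) (x₀ y₀ : ℝ) (δ : ℕ → ℝ)
    (w : ℕ → ℝ × ℝ) (j : ℕ) : Prop :=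
  (∀ i ≤ j, w i ∈ Wset x₀ y₀) ∧ 1 < nrm (w 0) ∧
  (∃ m n : ℤ, w 0 = (x₀ + (g : ℝ) * m, y₀ + (g : ℝ) * n) ∨
    w 0 = (-x₀ + (g : ℝ) * m, -y₀ + (g : ℝ) * n)) ∧
  ∀ i < j, IsChild g C x₀ y₀ (δ i) (w i) (w (i + 1))

/-- An (infinite) admissible sequence. -/
def AdmissibleSeq (g : ℕ) (C : ℝ) (x₀ y₀ : ℝ) (δ : ℕ → ℝ) (w : ℕ → ℝ × ℝ) : Prop :=
  ∀ j : ℕ, AdmissibleUpTo g C x₀ y₀ δ w j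


/-- Helper: `(y/k)^k ≤ exp y` for `y ≥ 0`. -/
lemma aux_pow_le_exp (k : ℕ) (y : ℝ) (hy : 0 ≤ y) : (y / k) ^ k ≤ Real.exp y := by
  rcases Nat.eq_zero_or_pos k with h | h
  · simp [h, Real.one_le_exp hy]
  · have hk : (k : ℝ) ≠ 0 := Nat.cast_ne_zero.mpr h.ne'
    have h1 : (y / k) ≤ Real.exp (y / k) := by
      have := Real.add_one_le_exp (y / k); linarith
    calc (y / k) ^ k ≤ (Real.exp (y / k)) ^ k :=
          pow_le_pow_left₀ (div_nonneg hy (Nat.cast_nonneg k)) h1 k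
      _ = Real.exp y := by
          rw [← Real.exp_nat_mul]; congr 1; field_simp

set_option maxHeartbeats 2000000 in
/-- Lemma "eps".  If `liminf j δ_j > 2` and `limsup j δ_j < ∞`, then
for every `ε > 0` there is `L₀` such that every admissible sequence with
`|w₀| ≥ L₀` satisfies `sup_j (log|w_j|)²/|w_j|^{δ_j δ_{j+1}} ≤ ε`. -/
theorem slowly_divergent_eps
    (g : ℕ) (hg : 2 ≤ g) (C : ℝ) (hC : 1 ≤ C)
    (x₀ y₀ : ℝ) (hind : QLinIndep x₀ y₀)
    (δ : ℕ → ℝ) (hδ : ∀ j, 0 < δ j)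
    (hliminf : ∃ c : ℝ, 2 < c ∧ ∀ᶠ (j : ℕ) in Filter.atTop, c ≤ (j : ℝ) * δ j)
    (hlimsup : ∃ B : ℝ, ∀ᶠ (j : ℕ) in Filter.atTop, (j : ℝ) * δ j ≤ B) :
    ∀ ε : ℝ, 0 < ε → ∃ L₀ : ℝ,
      ∀ w : ℕ → ℝ × ℝ, AdmissibleSeq g C x₀ y₀ δ w → L₀ ≤ nrm (w 0) →
        ∀ j : ℕ,
          (Real.log (nrm (w j))) ^ 2 / nrm (w j) ^ (δ j * δ (j + 1)) ≤ ε := by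
  intro ε hε
  -- extract the liminf data
  obtain ⟨c, hc2, hcev⟩ := hliminf
  obtain ⟨N₁, hN₁⟩ := Filter.eventually_atTop.mp hcev
  -- parameters
  set c' : ℝ := (c + 2) / 2 with hc'def
  have hc'2 : 2 < c' := by rw [hc'def]; linarith
  have hc'c : c' < c := by rw [hc'def]; linarith
  have hc'pos : 0 < c' := by linarith
  set n : ℕ := ⌈2 * c' / (c' - 2)⌉₊ + 3 with hndef
  have hn3 : 3 ≤ n := by omega
  have hnpos : 0 < (n : ℝ) := by positivity
  have hn_ge : 2 * c' / (c' - 2) ≤ (n : ℝ) := by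
    calc 2 * c' / (c' - 2) ≤ (⌈2 * c' / (c' - 2)⌉₊ : ℝ) := Nat.le_ceil _
      _ ≤ (n : ℝ) := by rw [hndef]; push_cast; linarith
  have hkey_n : 2 * (n : ℝ) ≤ c' * ((n : ℝ) - 2) := by
    have h := (div_le_iff₀ (by linarith : (0:ℝ) < c' - 2)).mp hn_ge
    nlinarith
  set M : ℕ := max N₁ (⌈c * c' / (c - c')⌉₊ + 1) with hMdef
  have hM1 : 1 ≤ M := le_trans (by omega) (le_max_right _ _)
  have hMN₁ : N₁ ≤ M := le_max_left _ _
  have hMpos : 0 < (M : ℝ) := by exact_mod_cast hM1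
  have hMc : c * c' / (c - c') ≤ (M : ℝ) := by
    calc c * c' / (c - c') ≤ (⌈c * c' / (c - c')⌉₊ : ℝ) := Nat.le_ceil _
      _ ≤ (M : ℝ) := by
          have : (⌈c * c' / (c - c')⌉₊ : ℕ) ≤ M := le_trans (by omega) (le_max_right _ _)
          exact_mod_cast this
  -- δ_i ≥ c / i for i ≥ M
  have hδc : ∀ i : ℕ, M ≤ i → c / (i : ℝ) ≤ δ i := by
    intro i hi
    have hipos : 0 < (i : ℝ) := lt_of_lt_of_le hMpos (by exact_mod_cast hi)
    have := hN₁ i (le_trans hMN₁ hi)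
    rw [div_le_iff₀ hipos]
    linarith [this]
  -- (1 + 1/i)^{c'} ≤ 1 + δ i  for i ≥ M
  have hstep : ∀ i : ℕ, M ≤ i → ((1 : ℝ) + 1 / i) ^ (c') ≤ 1 + δ i := by
    intro i hi
    have hipos : 0 < (i : ℝ) := lt_of_lt_of_le hMpos (by exact_mod_cast hi)
    have hiM : (M : ℝ) ≤ i := by exact_mod_cast hi
    have h1 : Real.log (1 + 1 / (i : ℝ)) ≤ 1 / i := by
      have := Real.log_le_sub_one_of_pos (by positivity : (0:ℝ) < 1 + 1 / i)
      linarith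
    have hic : (0:ℝ) < (i : ℝ) + c := by linarith
    have h2 : c / ((i : ℝ) + c) ≤ Real.log (1 + c / i) := by
      have hxpos : (0:ℝ) < (i:ℝ) / ((i:ℝ) + c) := by positivity
      have hl := Real.log_le_sub_one_of_pos hxpos
      have heq : Real.log ((i:ℝ) / ((i:ℝ) + c)) = - Real.log (1 + c / (i:ℝ)) := by
        rw [show (i:ℝ) / ((i:ℝ) + c) = (1 + c / (i:ℝ))⁻¹ by field_simp, Real.log_inv]
      have heq2 : (i:ℝ) / ((i:ℝ) + c) - 1 = -(c / ((i:ℝ) + c)) := by field_simp; ring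
      rw [heq, heq2] at hl
      linarith
    have h3 : c' * (1 / (i:ℝ)) ≤ c / ((i:ℝ) + c) := by
      have hcc : c * c' ≤ (c - c') * (i:ℝ) := by
        have := (div_le_iff₀ (by linarith : (0:ℝ) < c - c')).mp hMc
        nlinarith
      rw [mul_one_div, div_le_div_iff₀ hipos hic]
      nlinarith
    have h4 : c / (i:ℝ) ≤ δ i := hδc i hi
    have hbase : (0:ℝ) < 1 + 1 / i := by positivity
    calc ((1 : ℝ) + 1 / i) ^ (c') = Real.exp (c' * Real.log (1 + 1/(i:ℝ))) := by
          rw [Real.rpow_def_of_pos hbase, mul_comm]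
      _ ≤ Real.exp (Real.log (1 + c / i)) := by
          apply Real.exp_le_exp.mpr
          calc c' * Real.log (1 + 1/(i:ℝ)) ≤ c' * (1 / i) :=
                mul_le_mul_of_nonneg_left h1 (le_of_lt hc'pos)
            _ ≤ c / ((i:ℝ) + c) := h3
            _ ≤ Real.log (1 + c / i) := h2
      _ = 1 + c / i := Real.exp_log (by positivity)
      _ ≤ 1 + δ i := by linarith
  -- the thresholds
  set A : ℝ := (n : ℝ) ^ n * (M : ℝ) ^ (2 * n) / (ε * 2 ^ n) with hAdef
  set T2 : ℝ := ∑ i ∈ Finset.range M, 27 / (ε * (δ i * δ (i + 1)) ^ 3) with hT2def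
  set T : ℝ := max 1 (max A T2) with hTdef
  have hT1 : 1 ≤ T := le_max_left _ _
  have hTA : A ≤ T := le_trans (le_max_left _ _) (le_max_right _ _)
  have hTT2 : T2 ≤ T := le_trans (le_max_right _ _) (le_max_right _ _)
  have hTpos : 0 < T := lt_of_lt_of_le one_pos hT1
  refine ⟨Real.exp T, ?_⟩
  intro w hw hL₀ j
  -- basic consequences of admissibility
  have hchild : ∀ i : ℕ, IsChild g C x₀ y₀ (δ i) (w i) (w (i + 1)) :=
    fun i => (hw (i + 1)).2.2.2 i (Nat.lt_succ_self i)
  have hgt1 : ∀ i : ℕ, 1 < nrm (w i) := by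
    intro i
    induction i with
    | zero => exact (hw 0).2.1
    | succ k ih =>
      have h := (hchild k).2.1
      have : 1 < nrm (w k) ^ (1 + δ k) :=
        (Real.one_lt_rpow_iff_of_pos (by linarith)).mpr (Or.inl ⟨ih, by linarith [hδ k]⟩)
      linarith
  set t : ℕ → ℝ := fun i => Real.log (nrm (w i)) with htdef
  have hlogstep : ∀ i : ℕ, (1 + δ i) * t i ≤ t (i + 1) := by
    intro i
    have h := (hchild i).2.1
    have hpos : 0 < nrm (w i) := lt_trans one_pos (hgt1 i)
    calc (1 + δ i) * t i = Real.log (nrm (w i) ^ (1 + δ i)) := (Real.log_rpow hpos _).symm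
      _ ≤ t (i + 1) := Real.log_le_log (Real.rpow_pos_of_pos hpos _) h
  have ht0 : T ≤ t 0 := by
    calc T = Real.log (Real.exp T) := (Real.log_exp T).symm
      _ ≤ t 0 := Real.log_le_log (Real.exp_pos T) hL₀
  have htT : ∀ i : ℕ, T ≤ t i := by
    intro i
    induction i with
    | zero => exact ht0
    | succ k ih =>
      have h := hlogstep k
      have hδk := hδ k
      nlinarith
  -- lower bound for t j when j ≥ M
  have htlow : ∀ i : ℕ, M ≤ i → ((i : ℝ) / M) ^ (c') * T ≤ t i := by
    intro i hi
    induction i, hi using Nat.le_induction with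
    | base =>
      have : ((M : ℝ) / M) ^ (c') = 1 := by
        rw [div_self (ne_of_gt hMpos), Real.one_rpow]
      rw [this, one_mul]; exact htT M
    | succ k hk ih =>
      have hkpos : 0 < (k : ℝ) := lt_of_lt_of_le hMpos (by exact_mod_cast hk)
      have h1 : ((1 : ℝ) + 1 / k) ^ (c') ≤ 1 + δ k := hstep k hk
      have h2 : (1 + δ k) * t k ≤ t (k + 1) := hlogstep k
      have htk : 0 < t k := lt_of_lt_of_le hTpos (htT k)
      have hb1 : (0:ℝ) ≤ (1 : ℝ) + 1 / k := by positivity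
      have hb2 : (0:ℝ) ≤ (k : ℝ) / M := by positivity
      have key : (((k : ℝ) + 1) / M) ^ (c') * T ≤ (1 + δ k) * t k := by
        have heq : ((k : ℝ) + 1) / M = ((1 : ℝ) + 1 / k) * ((k : ℝ) / M) := by
          field_simp
        rw [heq, Real.mul_rpow hb1 hb2]
        calc ((1 : ℝ) + 1 / k) ^ (c') * ((k : ℝ) / M) ^ (c') * T
            = ((1 : ℝ) + 1 / k) ^ (c') * (((k : ℝ) / M) ^ (c') * T) := by ring
          _ ≤ (1 + δ k) * t k := by
              apply mul_le_mul h1 ih (by positivity) (by linarith [hδ k])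
      push_cast
      calc (((k : ℝ) + 1) / M) ^ (c') * T ≤ (1 + δ k) * t k := key
        _ ≤ t (k + 1) := h2
  -- now prove the bound for index j
  have hnrmpos : 0 < nrm (w j) := lt_trans one_pos (hgt1 j)
  set d : ℝ := δ j * δ (j + 1) with hddef
  have hd : 0 < d := mul_pos (hδ j) (hδ (j + 1))
  have hx : 0 < t j := lt_of_lt_of_le hTpos (htT j)
  rw [Real.rpow_def_of_pos hnrmpos, div_le_iff₀ (Real.exp_pos _), mul_comm (Real.log (nrm (w j))) d]
  show t j ^ 2 ≤ ε * Real.exp (d * t j)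
  rcases lt_or_ge j M with hjM | hjM
  · -- small j: use t j ≥ T ≥ T2 ≥ 27/(ε d³)
    have hterm : 27 / (ε * d ^ 3) ≤ T2 := by
      rw [hddef, hT2def]
      exact Finset.single_le_sum (f := fun i => 27 / (ε * (δ i * δ (i + 1)) ^ 3))
        (fun i _ => le_of_lt (div_pos (by norm_num)
          (mul_pos hε (pow_pos (mul_pos (hδ i) (hδ (i + 1))) 3)))) (Finset.mem_range.mpr hjM)
    have hxd : 27 / (ε * d ^ 3) ≤ t j := le_trans (le_trans hterm hTT2) (htT j)
    have h27 : 27 ≤ ε * d ^ 3 * t j := by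
      rw [div_le_iff₀ (by positivity)] at hxd; linarith
    have hexp : (d * t j / 3) ^ 3 ≤ Real.exp (d * t j) := by
      have := aux_pow_le_exp 3 (d * t j) (by positivity)
      simpa using this
    have : t j ^ 2 ≤ ε * (d * t j / 3) ^ 3 := by nlinarith [sq_nonneg (t j), hx, hd, hε]
    calc t j ^ 2 ≤ ε * (d * t j / 3) ^ 3 := this
      _ ≤ ε * Real.exp (d * t j) := by
          apply mul_le_mul_of_nonneg_left hexp (le_of_lt hε)
  · -- large j
    have hjpos : 0 < (j : ℝ) := lt_of_lt_of_le hMpos (by exact_mod_cast hjM)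
    have hj1 : (1:ℝ) ≤ j := by exact_mod_cast le_trans hM1 hjM
    have hdlow : 2 / (j : ℝ) ^ 2 ≤ d := by
      have h1 : c / (j : ℝ) ≤ δ j := hδc j hjM
      have h2 : c / ((j : ℝ) + 1) ≤ δ (j + 1) := by
        have := hδc (j + 1) (le_trans hjM (Nat.le_succ j))
        push_cast at this ⊢; linarith
      have hcj : 0 < c / (j : ℝ) := by positivity
      have hcj1 : 0 < c / ((j : ℝ) + 1) := by positivity
      have h3 : c / (j:ℝ) * (c / ((j:ℝ) + 1)) ≤ d := by
        apply mul_le_mul h1 h2 (le_of_lt hcj1) (by linarith [hδ j])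
      have h4 : 2 / (j : ℝ) ^ 2 ≤ c / (j:ℝ) * (c / ((j:ℝ) + 1)) := by
        rw [div_le_iff₀ (by positivity)]
        have : c / (j:ℝ) * (c / ((j:ℝ) + 1)) = c * c / ((j:ℝ) * ((j:ℝ) + 1)) := by
          field_simp
        rw [this, div_mul_eq_mul_div, le_div_iff₀ (by positivity)]
        have hc4 : (4:ℝ) ≤ c * c := by nlinarith
        have hjj : (j:ℝ) * 1 ≤ (j:ℝ) * (j:ℝ) :=
          mul_le_mul_of_nonneg_left hj1 (le_of_lt hjpos)
        nlinarith [sq_nonneg (j:ℝ), mul_le_mul_of_nonneg_right hc4 (sq_nonneg (j:ℝ))]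
      linarith
    -- t j ≥ (j/M)^{c'} T
    have hxlow : ((j : ℝ) / M) ^ (c') * T ≤ t j := htlow j hjM
    have hjM1 : (1:ℝ) ≤ (j : ℝ) / M := (one_le_div hMpos).mpr (by exact_mod_cast hjM)
    set u : ℝ := (j : ℝ) / M with hudef
    have hu : 1 ≤ u := hjM1
    have hu0 : (0:ℝ) ≤ u := by linarith
    have hx' : u ^ (c') * T ≤ t j := hxlow
    -- A > 0
    have hApos : 0 < A := by
      rw [hAdef]
      exact div_pos (mul_pos (pow_pos hnpos n) (pow_pos hMpos _))
        (mul_pos hε (by positivity))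
    -- chain of bounds for (t j)^(n-2)
    have he2 : (u ^ (c')) ^ (n - 2) = u ^ (c' * ((n:ℝ) - 2)) := by
      rw [← Real.rpow_natCast (u ^ (c')) (n - 2), ← Real.rpow_mul hu0,
        Nat.cast_sub (by omega : 2 ≤ n)]
      norm_num
    have he3 : u ^ (((2 * n : ℕ)):ℝ) ≤ u ^ (c' * ((n:ℝ) - 2)) := by
      apply Real.rpow_le_rpow_of_exponent_le hu
      rw [Nat.cast_mul, Nat.cast_ofNat]
      linarith [hkey_n]
    have he4 : u ^ (((2 * n : ℕ)):ℝ) = u ^ (2 * n) := Real.rpow_natCast _ _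
    have he5 : (j:ℝ) ^ (2 * n) / (M:ℝ) ^ (2 * n) = u ^ (2 * n) := by
      rw [hudef, div_pow]
    have hTpow : A ≤ T ^ (n - 2) := le_trans hTA (le_self_pow₀ hT1 (by omega))
    have hchain : (j:ℝ) ^ (2 * n) / (M:ℝ) ^ (2 * n) * A ≤ (t j) ^ (n - 2) := by
      have s1 : (j:ℝ) ^ (2 * n) / (M:ℝ) ^ (2 * n) * A ≤ u ^ (c' * ((n:ℝ) - 2)) * (T ^ (n - 2)) := by
        apply mul_le_mul _ hTpow (le_of_lt hApos) (by positivity)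
        rw [he5, ← he4]; exact he3
      have s2 : u ^ (c' * ((n:ℝ) - 2)) * (T ^ (n - 2)) = (u ^ (c') * T) ^ (n - 2) := by
        rw [mul_pow, he2]
      have s3 : (u ^ (c') * T) ^ (n - 2) ≤ (t j) ^ (n - 2) :=
        pow_le_pow_left₀ (by positivity) hx' (n - 2)
      calc (j:ℝ) ^ (2 * n) / (M:ℝ) ^ (2 * n) * A
          ≤ u ^ (c' * ((n:ℝ) - 2)) * (T ^ (n - 2)) := s1
        _ = (u ^ (c') * T) ^ (n - 2) := s2
        _ ≤ (t j) ^ (n - 2) := s3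
    have hA_eq : ε * 2 ^ n * ((j:ℝ) ^ (2 * n) / (M:ℝ) ^ (2 * n) * A) =
        (n:ℝ) ^ n * (j:ℝ) ^ (2 * n) := by
      rw [hAdef]
      field_simp
    have hfinal : (n:ℝ) ^ n * (j:ℝ) ^ (2 * n) ≤ ε * 2 ^ n * (t j) ^ (n - 2) := by
      calc (n:ℝ) ^ n * (j:ℝ) ^ (2 * n)
          = ε * 2 ^ n * ((j:ℝ) ^ (2 * n) / (M:ℝ) ^ (2 * n) * A) := hA_eq.symm
        _ ≤ ε * 2 ^ n * (t j) ^ (n - 2) := by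
            apply mul_le_mul_of_nonneg_left hchain
            exact le_of_lt (mul_pos hε (by positivity))
    -- wrap up via exp lower bound
    have hexp : (d * t j / n) ^ n ≤ Real.exp (d * t j) :=
      aux_pow_le_exp n (d * t j) (by positivity)
    have hstep2 : (2 * t j / ((n:ℝ) * (j:ℝ) ^ 2)) ^ n ≤ (d * t j / n) ^ n := by
      apply pow_le_pow_left₀ (by positivity)
      rw [div_le_div_iff₀ (by positivity) hnpos]
      have h2d : (2:ℝ) ≤ d * (j:ℝ) ^ 2 := by
        rw [div_le_iff₀ (by positivity)] at hdlow; linarith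
      have hh := mul_nonneg (sub_nonneg.mpr h2d) (mul_nonneg (le_of_lt hx) (le_of_lt hnpos))
      nlinarith [hh]
    suffices hS : t j ^ 2 ≤ ε * (2 * t j / ((n:ℝ) * (j:ℝ) ^ 2)) ^ n by
      exact le_trans hS (mul_le_mul_of_nonneg_left (le_trans hstep2 hexp) (le_of_lt hε))
    have hrhs : (2 * t j / ((n:ℝ) * (j:ℝ) ^ 2)) ^ n
        = 2 ^ n * (t j) ^ n / ((n:ℝ) ^ n * ((j:ℝ) ^ 2) ^ n) := by
      rw [div_pow, mul_pow, mul_pow]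
    rw [hrhs]
    rw [← mul_div_assoc]
    rw [le_div_iff₀ (by positivity : (0:ℝ) < (n:ℝ) ^ n * ((j:ℝ) ^ 2) ^ n)]
    have hxn : t j ^ n = t j ^ (n - 2) * t j ^ 2 := by
      rw [← pow_add, Nat.sub_add_cancel (by omega : 2 ≤ n)]
    have hj2n : ((j:ℝ) ^ 2) ^ n = (j:ℝ) ^ (2 * n) := by rw [← pow_mul]
    rw [hxn, hj2n]
    have hmul := mul_le_mul_of_nonneg_right hfinal (sq_nonneg (t j))
    calc t j ^ 2 * ((n:ℝ) ^ n * (j:ℝ) ^ (2 * n))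
        = (n:ℝ) ^ n * (j:ℝ) ^ (2 * n) * t j ^ 2 := by ring
      _ ≤ ε * 2 ^ n * t j ^ (n - 2) * t j ^ 2 := hmul
      _ = ε * (2 ^ n * (t j ^ (n - 2) * t j ^ 2)) := by ring
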